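/- Let F : ℝⁿ × [0,∞) → Set ℝⁿ be a set-valued map and let (x_k)_{k∈ℕ} ⊂ ℝⁿ, (α_k)_{k∈ℕ} ⊂ (0,∞), (e_k)_{k∈ℕ} ⊂ ℝⁿ, and (w_k)_{k∈ℕ} satisfy w_k ∈ F(x_k, α_k) and x_{k+1} = x_k + w_k + e_k for all k. Assume: (i) α_k → ᾱ for some ᾱ ≥ 0; (ii) Σ_{k=0}^∞ α_k = ∞; (iii) (Σ_{k=0}^N e_k)/(Σ_{k=0}^N α_k) → 0 as N → ∞; (iv) x_k → x*; and (v) the map (y,α) ↦ F(y,α)/α is locally bounded near (x*, ᾱ), i.e., there exist r > 0 and M > 0 such that for all y with |y − x*| ≤ r, all α > 0 with |α − ᾱ| ≤ r, and all v ∈ F(y,α), one has |v|/α ≤ M. Define G := { v ∈ ℝⁿ : there exist sequences (y_j, α_j) → (x*, ᾱ) with α_j > 0 and u_j ∈ F(y_j, α_j) such that u_j/α_j → v }. Then 0 belongs to the convex hull of G. -/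

import Mathlib

open Filter

section Aux

private lemma pad_sum {β : Type*} [AddCommMonoid β] {c m : ℕ} (hcm : c ≤ m) (G : Fin c → β) :
    (∑ j : Fin m, if h : (j : ℕ) < c then G ⟨j, h⟩ else 0) = ∑ i : Fin c, G i := by
  have h1 : (∑ j : Fin m, if h : (j : ℕ) < c then G ⟨j, h⟩ else 0)
      = ∑ j ∈ Finset.range m, (fun j => if h : j < c then G ⟨j, h⟩ else 0) j :=
    Fin.sum_univ_eq_sum_range (fun j => if h : j < c then G ⟨j, h⟩ else 0) m
  have h2 : (∑ i : Fin c, G i)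
      = ∑ j ∈ Finset.range c, (fun j => if h : j < c then G ⟨j, h⟩ else 0) j := by
    rw [← Fin.sum_univ_eq_sum_range (fun j => if h : j < c then G ⟨j, h⟩ else 0) c]
    exact Finset.sum_congr rfl fun i _ => by simp
  rw [h1, h2]
  refine (Finset.sum_subset (Finset.range_subset_range.2 hcm) fun j _ hj => ?_).symm
  rw [Finset.mem_range, not_lt] at hj
  simp [not_lt.2 hj]

private lemma isCompact_convexHull_of_isCompact {E : Type*} [NormedAddCommGroup E]
    [NormedSpace ℝ E] [FiniteDimensional ℝ E] {s : Set E} (hs : IsCompact s) :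
    IsCompact (convexHull ℝ s) := by
  rcases s.eq_empty_or_nonempty with rfl | ⟨z, hz⟩
  · simpa using isCompact_empty
  set m := Module.finrank ℝ E + 1 with hm
  set f : (Fin m → ℝ) × (Fin m → E) → E := fun p => ∑ i, p.1 i • p.2 i with hf
  have hK : IsCompact ((stdSimplex ℝ (Fin m)) ×ˢ (Set.univ.pi fun _ : Fin m => s)) :=
    (isCompact_stdSimplex (𝕜 := ℝ) (ι := Fin m)).prod (isCompact_univ_pi fun _ => hs)
  have hfc : Continuous f := by
    refine continuous_finset_sum _ fun i _ => ?_
    exact ((continuous_apply i).comp continuous_fst).smul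
      ((continuous_apply i).comp continuous_snd)
  have himg : convexHull ℝ s
      = f '' ((stdSimplex ℝ (Fin m)) ×ˢ (Set.univ.pi fun _ : Fin m => s)) := by
    apply Set.Subset.antisymm
    · intro q hq
      rw [convexHull_eq_union] at hq
      simp only [Set.mem_iUnion] at hq
      obtain ⟨t, ht, hai, hqt⟩ := hq
      have hcard : t.card ≤ m := by
        have h1 := hai.card_le_finrank_succ (k := ℝ)
        have h2 : Module.finrank ℝ (vectorSpan ℝ (Set.range ((↑) : t → E)))
            ≤ Module.finrank ℝ E := (vectorSpan ℝ (Set.range ((↑) : t → E))).finrank_le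
      

        calc t.card = Fintype.card t := (Fintype.card_coe t).symm
          _ ≤ _ := h1
          _ ≤ m := by omega
      rw [Finset.convexHull_eq] at hqt
      obtain ⟨w, hw0, hw1, hwq⟩ := hqt
      rw [Finset.centerMass_eq_of_sum_1 _ _ hw1] at hwq
      set c := t.card with hc
      set ee := t.equivFin.symm with hee
      set lam : Fin m → ℝ := fun j => if h : (j : ℕ) < c then w (ee ⟨j, h⟩) else 0 with hlam
      set y : Fin m → E := fun j => if h : (j : ℕ) < c then (ee ⟨j, h⟩ : E) else z with hy
      refine ⟨(lam, y), ⟨⟨fun j => ?_, ?_⟩, fun j _ => ?_⟩, ?_⟩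
      · by_cases h : (j : ℕ) < c
        · simpa [lam, h] using hw0 _ (ee ⟨j, h⟩).2
        · simp [lam, h]
      · have := pad_sum hcard (fun i => w (ee i))
        simp only [lam]
        rw [this, Equiv.sum_comp t.equivFin.symm (fun a : t => w a)]
        rw [Finset.sum_coe_sort t w]
        exact hw1
      · by_cases h : (j : ℕ) < c
        · simpa [y, h] using ht (ee ⟨j, h⟩).2
        · simpa [y, h] using hz
      · show (∑ i : Fin m, lam i • y i) = q
        have hterm : ∀ j : Fin m, lam j • y j
            = if h : (j : ℕ) < c then w (ee ⟨j, h⟩) • (ee ⟨j, h⟩ : E) else 0 := by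
          intro j
          by_cases h : (j : ℕ) < c <;> simp [lam, y, h]
        rw [Finset.sum_congr rfl fun j _ => hterm j,
          pad_sum hcard (fun i => w (ee i) • (ee i : E)),
          Equiv.sum_comp t.equivFin.symm (fun a : t => w a • (a : E)),
          Finset.sum_coe_sort t (fun a => w a • a)]
        rw [← hwq]
        exact Finset.sum_congr rfl fun a _ => rfl
    · rintro _ ⟨⟨lam, y⟩, ⟨hlam, hy⟩, rfl⟩
      exact (convex_convexHull ℝ s).sum_mem (fun i _ => hlam.1 i) hlam.2
        (fun i _ => subset_convexHull ℝ s (hy i (Set.mem_univ i)))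
  rw [himg]
  exact hK.image hfc

end Aux

/-- If a realization of the difference inclusion converges and the scaled
update map is locally bounded, then `0` lies in the convex hull of the outer limit of the
scaled update map at the limit point. -/
theorem zero_mem_convexHull_outer_limit {n : ℕ}
    (F : EuclideanSpace ℝ (Fin n) → ℝ → Set (EuclideanSpace ℝ (Fin n)))
    (x w e : ℕ → EuclideanSpace ℝ (Fin n)) (α : ℕ → ℝ)
    (hαpos : ∀ k, 0 < α k)
    (hw : ∀ k, w k ∈ F (x k) (α k))
    (hrec : ∀ k, x (k + 1) = x k + w k + e k)
    (ᾱ : ℝ) (hᾱ : 0 ≤ ᾱ)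
    (hαlim : Tendsto α atTop (nhds ᾱ))
    (hdiv : Tendsto (fun N => ∑ k ∈ Finset.range (N + 1), α k) atTop atTop)
    (hnoise : Tendsto
      (fun N => (∑ k ∈ Finset.range (N + 1), α k)⁻¹ • (∑ k ∈ Finset.range (N + 1), e k))
      atTop (nhds 0))
    (xstar : EuclideanSpace ℝ (Fin n)) (hxlim : Tendsto x atTop (nhds xstar))
    (hlb : ∃ r > (0 : ℝ), ∃ M > (0 : ℝ), ∀ y, ‖y - xstar‖ ≤ r → ∀ a : ℝ, 0 < a →
      |a - ᾱ| ≤ r → ∀ v ∈ F y a, ‖v‖ / a ≤ M) :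
    (0 : EuclideanSpace ℝ (Fin n)) ∈ convexHull ℝ
      {v : EuclideanSpace ℝ (Fin n) |
        ∃ (y : ℕ → EuclideanSpace ℝ (Fin n)) (a : ℕ → ℝ)
          (u : ℕ → EuclideanSpace ℝ (Fin n)),
          (∀ j, 0 < a j) ∧ Tendsto y atTop (nhds xstar) ∧ Tendsto a atTop (nhds ᾱ) ∧
          (∀ j, u j ∈ F (y j) (a j)) ∧
          Tendsto (fun j => (a j)⁻¹ • u j) atTop (nhds v)} := by
  classical
  obtain ⟨r, hr, M, hM, hbound⟩ := hlb
  set v : ℕ → EuclideanSpace ℝ (Fin n) := fun k => (α k)⁻¹ • w k with hv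
  -- eventual boundedness of the scaled updates
  have hball : ∀ᶠ k in atTop, ‖v k‖ ≤ M := by
    have h1 : ∀ᶠ k in atTop, ‖x k - xstar‖ ≤ r := by
      filter_upwards [hxlim (Metric.ball_mem_nhds xstar hr)] with k hk
      rw [← dist_eq_norm]
      exact le_of_lt (Metric.mem_ball.mp hk)
    have h2 : ∀ᶠ k in atTop, |α k - ᾱ| ≤ r := by
      filter_upwards [hαlim (Metric.ball_mem_nhds ᾱ hr)] with k hk
      rw [← Real.dist_eq]
      exact le_of_lt (Metric.mem_ball.mp hk)
    filter_upwards [h1, h2] with k hk1 hk2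
    have := hbound (x k) hk1 (α k) (hαpos k) hk2 (w k) (hw k)
    have hnorm : ‖v k‖ = ‖w k‖ / α k := by
      rw [hv]
      simp only
      rw [norm_smul, Real.norm_eq_abs, abs_inv, abs_of_pos (hαpos k), div_eq_inv_mul]
    rw [hnorm]
    exact this
  obtain ⟨K0, hK0⟩ := eventually_atTop.mp hball
  -- the set of cluster points of `v`
  set L : Set (EuclideanSpace ℝ (Fin n)) := {p | MapClusterPt p atTop v} with hL
  have hLb : ∀ p ∈ L, p ∈ Metric.closedBall (0 : EuclideanSpace ℝ (Fin n)) M := by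
    intro p hp
    have hmem : v '' Set.Ici K0 ∈ Filter.map v atTop :=
      mem_map.2 (mem_atTop_sets.2 ⟨K0, fun k hk => Set.mem_image_of_mem v hk⟩)
    have hcl : p ∈ closure (v '' Set.Ici K0) :=
      mem_closure_iff_clusterPt.2 (ClusterPt.mono hp.clusterPt (le_principal_iff.2 hmem))
    have hsub : v '' Set.Ici K0 ⊆ Metric.closedBall (0 : EuclideanSpace ℝ (Fin n)) M := by
      rintro _ ⟨k, hk, rfl⟩
      exact Metric.mem_closedBall.2 (by simpa [dist_eq_norm] using hK0 k hk)
    exact closure_minimal hsub Metric.isClosed_closedBall hcl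
  have hLclosed : IsClosed L := isClosed_setOf_clusterPt
  have hLcompact : IsCompact L :=
    (isCompact_closedBall (0 : EuclideanSpace ℝ (Fin n)) M).of_isClosed_subset hLclosed hLb
  -- L is contained in the target set
  have hLS : L ⊆ {vv : EuclideanSpace ℝ (Fin n) |
      ∃ (y : ℕ → EuclideanSpace ℝ (Fin n)) (a : ℕ → ℝ) (u : ℕ → EuclideanSpace ℝ (Fin n)),
        (∀ j, 0 < a j) ∧ Tendsto y atTop (nhds xstar) ∧ Tendsto a atTop (nhds ᾱ) ∧
        (∀ j, u j ∈ F (y j) (a j)) ∧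
        Tendsto (fun j => (a j)⁻¹ • u j) atTop (nhds vv)} := by
    intro p hp
    obtain ⟨ψ, hψ, hlim⟩ := TopologicalSpace.FirstCountableTopology.tendsto_subseq hp
    refine ⟨x ∘ ψ, α ∘ ψ, w ∘ ψ, fun j => hαpos (ψ j),
      hxlim.comp hψ.tendsto_atTop, hαlim.comp hψ.tendsto_atTop, fun j => hw (ψ j), ?_⟩
    exact hlim
  refine convexHull_mono hLS ?_
  by_contra h0
  have hconvL : IsCompact (convexHull ℝ L) := isCompact_convexHull_of_isCompact hLcompact
  obtain ⟨f, c, hfc, hsep⟩ :=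
    geometric_hahn_banach_point_closed (convex_convexHull ℝ L) hconvL.isClosed h0
  have hc : 0 < c := by simpa using hfc
  -- eventually f (v k) ≥ c
  have hev : ∀ᶠ k in atTop, c ≤ f (v k) := by
    by_contra hcon
    rw [not_eventually] at hcon
    have hfreq : ∃ᶠ k in atTop, (f (v k) < c ∧ K0 ≤ k) :=
      (hcon.mono fun k hk => lt_of_not_ge hk).and_eventually (eventually_ge_atTop K0)
    obtain ⟨φ, hφmono, hφprop⟩ := extraction_of_frequently_atTop hfreq
    have hmem : ∀ j, v (φ j) ∈ Metric.closedBall (0 : EuclideanSpace ℝ (Fin n)) M := fun j =>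
      Metric.mem_closedBall.2 (by simpa [dist_eq_norm] using hK0 (φ j) (hφprop j).2)
    obtain ⟨p, _, ψ, hψ, hlim⟩ := (isCompact_closedBall (0 : EuclideanSpace ℝ (Fin n)) M).tendsto_subseq hmem
    have hcomp : Tendsto (v ∘ (φ ∘ ψ)) atTop (nhds p) := hlim
    have hpL : p ∈ L :=
      MapClusterPt.of_comp ((hφmono.comp hψ).tendsto_atTop) hcomp.mapClusterPt
    have h1 : c < f p := hsep p (subset_convexHull ℝ L hpL)
    have h2 : f p ≤ c :=
      le_of_tendsto ((f.continuous.tendsto p).comp hcomp)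
        (Filter.Eventually.of_forall fun j => (hφprop (ψ j)).1.le)
    linarith
  obtain ⟨K1, hK1⟩ := eventually_atTop.mp hev
  set S : ℕ → ℝ := fun N => ∑ k ∈ Finset.range (N + 1), α k with hSdef
  have hSpos : ∀ N, 0 < S N := fun N =>
    Finset.sum_pos (fun k _ => hαpos k) (Finset.nonempty_range_iff.2 (Nat.succ_ne_zero N))
  -- telescoping
  have htel : ∀ N, ∑ k ∈ Finset.range (N + 1), w k
      = x (N + 1) - x 0 - ∑ k ∈ Finset.range (N + 1), e k := by
    intro N
    induction N with
    | zero =>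
        rw [Finset.sum_range_one, Finset.sum_range_one, hrec 0]
        abel
    | succ N ih =>
        rw [Finset.sum_range_succ w (N + 1), ih, Finset.sum_range_succ e (N + 1), hrec (N + 1)]
        abel
  set A : ℕ → EuclideanSpace ℝ (Fin n) := fun N => (S N)⁻¹ • ∑ k ∈ Finset.range (N + 1), w k with hAdef
  have hA0 : Tendsto A atTop (nhds 0) := by
    have h1 : Tendsto (fun N => (S N)⁻¹) atTop (nhds 0) := hdiv.inv_tendsto_atTop
    have h2 : Tendsto (fun N => x (N + 1) - x 0) atTop (nhds (xstar - x 0)) :=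
      (hxlim.comp (tendsto_add_atTop_nat 1)).sub_const (x 0)
    have h3 : Tendsto (fun N => (S N)⁻¹ • (x (N + 1) - x 0)) atTop
        (nhds ((0 : ℝ) • (xstar - x 0))) := h1.smul h2
    rw [zero_smul] at h3
    have h4 := h3.sub hnoise
    rw [sub_zero] at h4
    have : A = fun N => (S N)⁻¹ • (x (N + 1) - x 0)
        - (S N)⁻¹ • ∑ k ∈ Finset.range (N + 1), e k := by
      funext N
      rw [hAdef]
      simp only
      rw [htel N, smul_sub]
    rw [this]
    exact h4
  have hfA : Tendsto (fun N => f (A N)) atTop (nhds 0) := by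
    have := (f.continuous.tendsto 0).comp hA0
    simpa [Function.comp_def] using this
  -- the key lower bound
  set B : ℝ := ∑ k ∈ Finset.range K1, (f (w k) - c * α k) with hB
  have hfw : ∀ k, K1 ≤ k → c * α k ≤ f (w k) := by
    intro k hk
    have hwk : w k = α k • v k := by
      rw [hv]; simp only; rw [smul_inv_smul₀ (hαpos k).ne']
    rw [hwk, map_smul, smul_eq_mul, mul_comm c (α k)]
    exact mul_le_mul_of_nonneg_left (hK1 k hk) (hαpos k).le
  have key : ∀ᶠ N in atTop, (S N)⁻¹ * B + c ≤ f (A N) := by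
    filter_upwards [eventually_ge_atTop K1] with N hN
    have hsubset : Finset.range K1 ⊆ Finset.range (N + 1) :=
      Finset.range_subset_range.2 (by omega)
    have hWlow : B + c * S N ≤ f (∑ k ∈ Finset.range (N + 1), w k) := by
      rw [map_sum]
      have hsum : ∑ k ∈ Finset.range (N + 1), f (w k)
          = (∑ k ∈ Finset.range (N + 1), (f (w k) - c * α k)) + c * S N := by
        rw [hSdef]
        simp only
        rw [Finset.mul_sum, ← Finset.sum_add_distrib]
        exact Finset.sum_congr rfl fun k _ => by ring
      rw [hsum]
      have hBle : B ≤ ∑ k ∈ Finset.range (N + 1), (f (w k) - c * α k) := by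
        refine Finset.sum_le_sum_of_subset_of_nonneg hsubset fun k hk1 hk2 => ?_
        rw [Finset.mem_range, not_lt] at hk2
        linarith [hfw k hk2]
      linarith
    have hApos : (0 : ℝ) < (S N)⁻¹ := inv_pos.2 (hSpos N)
    have := mul_le_mul_of_nonneg_left hWlow hApos.le
    rw [mul_add, mul_comm c (S N), ← mul_assoc, inv_mul_cancel₀ (hSpos N).ne', one_mul] at this
    calc (S N)⁻¹ * B + c ≤ (S N)⁻¹ * f (∑ k ∈ Finset.range (N + 1), w k) := this
      _ = f (A N) := by rw [hAdef]; simp only; rw [map_smul, smul_eq_mul]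
  have hlim2 : Tendsto (fun N => (S N)⁻¹ * B + c) atTop (nhds ((0 : ℝ) * B + c)) :=
    (hdiv.inv_tendsto_atTop.mul_const B).add_const c
  rw [zero_mul, zero_add] at hlim2
  have : c ≤ 0 := le_of_tendsto_of_tendsto hlim2 hfA key
  linarith
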